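/- Let p be a prime and let n ≥ k ≥ 2 be integers. Then Φ(n,k,p) ≤ μ_p·(n−k+1−⌊(n−k+1)/(p+1)⌋); that is, every linear code of length n and dimension k over ℤ_p has minimum Lee distance at most μ_p·(n−k+1−⌊(n−k+1)/(p+1)⌋). -/

import Mathlib

/-- Lee weight of an element of `ZMod q`. -/
noncomputable def leeWt {q : ℕ} (a : ZMod q) : ℕ := min (ZMod.val a) (q - ZMod.val a)

/-- Lee weight of a vector over `ZMod q`. -/
noncomputable def leeWtVec {q n : ℕ} (x : Fin n → ZMod q) : ℕ := ∑ i, leeWt (x i)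

/-- Minimum Lee distance (= minimum Lee weight of a nonzero codeword) of a linear code. -/
noncomputable def minLee {q n : ℕ} (C : Submodule (ZMod q) (Fin n → ZMod q)) : ℕ :=
  sInf {w | ∃ x ∈ C, x ≠ 0 ∧ leeWtVec x = w}

/-- Minimum Hamming distance (= minimum Hamming weight of a nonzero codeword). -/
noncomputable def minHam {q n : ℕ} (C : Submodule (ZMod q) (Fin n → ZMod q)) : ℕ :=
  sInf {w | ∃ x ∈ C, x ≠ 0 ∧ hammingNorm x = w}

/-- Average nonzero Lee weight of `ZMod q`. -/
noncomputable def mu (q : ℕ) : ℚ :=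
  if Even q then (q : ℚ)^2 / (4 * ((q : ℚ) - 1)) else ((q : ℚ) + 1) / 4

/-- `Phi n k p`: the maximum minimum Lee distance over `k`-dimensional linear codes
of length `n` over `ZMod p`. -/
noncomputable def Phi (n k p : ℕ) : ℕ :=
  sSup {d | ∃ C : Submodule (ZMod p) (Fin n → ZMod p),
    Module.finrank (ZMod p) ↥C = k ∧ minLee C = d}

/-- Rank of a linear code over `ZMod q`: minimal number of generators. -/
noncomputable def codeRank {q n : ℕ} (C : Submodule (ZMod q) (Fin n → ZMod q)) : ℕ :=
  sInf {m | ∃ s : Finset (Fin n → ZMod q), s.card = m ∧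
    Submodule.span (ZMod q) (↑s : Set (Fin n → ZMod q)) = C}

/-- `PhiR n K q`: the maximum minimum Lee distance over rank-`K` linear codes of
length `n` over `ZMod q`. -/
noncomputable def PhiR (n K q : ℕ) : ℕ :=
  sSup {d | ∃ C : Submodule (ZMod q) (Fin n → ZMod q), codeRank C = K ∧ minLee C = d}


open Finset Module

section Aux

lemma sum_min_formula (q : ℕ) (hq : 1 ≤ q) :
    4 * (∑ j ∈ range q, min j (q - j)) = if Even q then q^2 else q^2 - 1 := by
  set h := q / 2 with hh
  have hle : h + 1 ≤ q := by omega
  have hsplit : (∑ j ∈ range q, min j (q - j))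
      = (∑ j ∈ range (h+1), min j (q - j)) + ∑ j ∈ Ico (h+1) q, min j (q - j) := by
    rw [range_eq_Ico, ← Finset.sum_Ico_consecutive _ (Nat.zero_le _) hle, range_eq_Ico]
  have h1 : (∑ j ∈ range (h+1), min j (q - j)) = ∑ j ∈ range (h+1), j := by
    apply Finset.sum_congr rfl
    intro j hj
    rw [Finset.mem_range] at hj
    exact min_eq_left (by omega)
  have h2 : (∑ j ∈ Ico (h+1) q, min j (q - j)) = ∑ j ∈ range (q - (h+1)), (q - (h+1) - j) := by
    rw [Finset.sum_Ico_eq_sum_range]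
    apply Finset.sum_congr rfl
    intro j hj
    rw [Finset.mem_range] at hj
    rw [min_eq_right (by omega)]
    omega
  set r := q - (h+1) with hr
  have h3 : (∑ j ∈ range r, (r - j)) = (∑ j ∈ range r, j) + r := by
    calc (∑ j ∈ range r, (r - j)) = ∑ j ∈ range r, ((r - 1 - j) + 1) := by
          apply Finset.sum_congr rfl; intro j hj; rw [Finset.mem_range] at hj; omega
      _ = (∑ j ∈ range r, (r - 1 - j)) + r := by
          rw [Finset.sum_add_distrib]; simp
      _ = (∑ j ∈ range r, j) + r := by rw [Finset.sum_range_reflect (fun t => t) r]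
  have g1 : (∑ j ∈ range (h+1), j) * 2 = (h+1) * h := by
    simpa using Finset.sum_range_id_mul_two (h+1)
  have g2 : (∑ j ∈ range r, j) * 2 = r * (r - 1) := Finset.sum_range_id_mul_two r
  rw [hsplit, h1, h2, h3]
  clear_value h r
  clear hsplit h1 h2 h3
  rcases Nat.even_or_odd q with he | ho
  · rw [if_pos he]
    have hq2 : q = 2 * (r + 1) := by
      obtain ⟨c, hc⟩ := he; omega
    have hh1 : h = r + 1 := by omega
    subst hh1
    have g2' : ((∑ j ∈ range r, j) + r) * 2 = (r + 1) * r := by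
      rcases Nat.eq_zero_or_pos r with rfl | hrpos
      · simp
      · have : r * (r - 1) + 2 * r = (r+1) * r := by
          have : r - 1 + 1 = r := by omega
          nlinarith [this]
        omega
    rw [hq2]
    nlinarith [g1, g2']
  · rw [if_neg (Nat.not_even_iff_odd.mpr ho)]
    have hq2 : q = 2 * r + 1 := by obtain ⟨c, hc⟩ := ho; omega
    have hh1 : r = h := by omega
    subst hh1
    have g2' : ((∑ j ∈ range r, j) + r) * 2 = (r + 1) * r := by
      rcases Nat.eq_zero_or_pos r with hzero | hrpos
      · rw [hzero]; simp
      · have h5 : r - 1 + 1 = r := by omega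
        nlinarith [g2, h5]
    rw [hq2, show (2*r+1)^2 = 4*((r+1)*r) + 1 from by ring, Nat.add_sub_cancel]
    nlinarith [g1, g2']

lemma sum_leeWt (p : ℕ) [NeZero p] :
    (∑ a : ZMod p, leeWt a) = ∑ j ∈ range p, min j (p - j) := by
  rw [← Fin.sum_univ_eq_sum_range (fun j => min j (p - j)) p]
  rcases p with _ | m
  · exact absurd rfl (NeZero.ne 0)
  · rfl
lemma sum_leeWt_eq_mu (p : ℕ) [NeZero p] (hp : 2 ≤ p) :
    ((∑ a : ZMod p, leeWt a : ℕ) : ℚ) = ((p : ℚ) - 1) * mu p := by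
  have h4 := sum_min_formula p (by omega)
  rw [sum_leeWt]
  set S : ℕ := ∑ j ∈ range p, min j (p - j) with hS
  have hp1 : (0:ℚ) < (p:ℚ) - 1 := by
    have : (2:ℚ) ≤ (p:ℚ) := by exact_mod_cast hp
    linarith
  rcases Nat.even_or_odd p with he | ho
  · rw [if_pos he] at h4
    have hc : (4:ℚ) * (S:ℚ) = (p:ℚ)^2 := by exact_mod_cast congrArg (Nat.cast (R := ℚ)) h4
    unfold mu; rw [if_pos he]
    field_simp
    linear_combination hc
  · rw [if_neg (Nat.not_even_iff_odd.mpr ho)] at h4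
    have h1 : 1 ≤ p^2 := by nlinarith
    have hc : (4:ℚ) * (S:ℚ) = (p:ℚ)^2 - 1 := by
      have := congrArg (Nat.cast (R := ℚ)) h4
      push_cast [h1] at this
      linarith
    unfold mu; rw [if_neg (Nat.not_even_iff_odd.mpr ho)]
    field_simp
    linear_combination hc

lemma leeWt_zero (p : ℕ) [NeZero p] : leeWt (0 : ZMod p) = 0 := by
  unfold leeWt
  rw [ZMod.val_zero]
  simp

lemma exists_smul_leeWt_le (p n : ℕ) (hp : p.Prime) (x : Fin n → ZMod p) :
    ∃ c : ZMod p, c ≠ 0 ∧ (leeWtVec (c • x) : ℚ) ≤ mu p * (hammingNorm x : ℚ) := by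
  haveI : Fact p.Prime := ⟨hp⟩
  set s : Finset (ZMod p) := Finset.univ.erase 0 with hs
  have hone : (1 : ZMod p) ∈ s := by
    simp [hs, one_ne_zero]
  have hcard : s.card = p - 1 := by
    rw [hs, Finset.card_erase_of_mem (Finset.mem_univ _), Finset.card_univ, ZMod.card]
  set T : ℕ := ∑ a : ZMod p, leeWt a with hT
  have hsum : ∑ c ∈ s, leeWtVec (c • x) = hammingNorm x * T := by
    unfold leeWtVec
    rw [Finset.sum_comm]
    have hinner : ∀ i : Fin n, (∑ c ∈ s, leeWt ((c • x) i)) = if x i ≠ 0 then T else 0 := by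
      intro i
      by_cases hxi : x i = 0
      · simp only [hxi, if_neg (not_not.mpr rfl)]
        rw [Finset.sum_eq_zero]
        intro c _
        simp [Pi.smul_apply, smul_eq_mul, hxi, leeWt_zero]
      · rw [if_pos hxi]
        have hbij : (∑ c ∈ s, leeWt ((c • x) i)) = ∑ a ∈ s, leeWt a := by
          apply Finset.sum_nbij' (fun c => c * x i) (fun a => a * (x i)⁻¹)
          · intro c hc
            simp only [hs, Finset.mem_erase, Finset.mem_univ, and_true] at hc ⊢
            exact mul_ne_zero hc hxi
          · intro a ha
            simp only [hs, Finset.mem_erase, Finset.mem_univ, and_true] at ha ⊢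
            exact mul_ne_zero ha (inv_ne_zero hxi)
          · intro c hc
            field_simp
          · intro a ha
            field_simp
          · intro c hc
            simp [Pi.smul_apply, smul_eq_mul]
        rw [hbij, hT]
        exact Finset.sum_erase _ (leeWt_zero p)
    rw [Finset.sum_congr rfl (fun i _ => hinner i)]
    rw [← Finset.sum_filter, Finset.sum_const, smul_eq_mul]
    rfl
  obtain ⟨c, hcs, hmin⟩ := Finset.exists_min_image s (fun c => leeWtVec (c • x)) ⟨1, hone⟩
  refine ⟨c, by simpa [hs] using hcs, ?_⟩
  have hle : s.card * leeWtVec (c • x) ≤ ∑ c ∈ s, leeWtVec (c • x) := by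
    calc s.card * leeWtVec (c • x) = ∑ _c ∈ s, leeWtVec (c • x) := by
          rw [Finset.sum_const, smul_eq_mul]
      _ ≤ ∑ c' ∈ s, leeWtVec (c' • x) := Finset.sum_le_sum (fun c' hc' => hmin c' hc')
  rw [hsum, hcard] at hle
  have hp2 : 2 ≤ p := hp.two_le
  have hQ : ((p:ℚ) - 1) * (leeWtVec (c • x) : ℚ) ≤ (hammingNorm x : ℚ) * (((p:ℚ) - 1) * mu p) := by
    have := sum_leeWt_eq_mu p hp2
    rw [← hT] at this
    have hcast : (((p - 1) * leeWtVec (c • x) : ℕ) : ℚ) ≤ ((hammingNorm x * T : ℕ) : ℚ) := by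
      exact_mod_cast hle
    push_cast at hcast
    have hpc : ((p:ℚ) - 1) = ((p - 1 : ℕ) : ℚ) := by
      have : (1:ℚ) ≤ (p:ℚ) := by exact_mod_cast Nat.one_le_of_lt hp2
      push_cast [Nat.cast_sub (by omega : 1 ≤ p)]
      ring
    rw [hpc]
    calc ((p - 1 : ℕ) : ℚ) * (leeWtVec (c • x) : ℚ) ≤ (hammingNorm x : ℚ) * (T : ℚ) := by
          exact_mod_cast hcast
      _ = (hammingNorm x : ℚ) * (((p - 1 : ℕ) : ℚ) * mu p) := by rw [this, hpc]
  have hp1 : (0:ℚ) < (p:ℚ) - 1 := by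
    have : (2:ℚ) ≤ (p:ℚ) := by exact_mod_cast hp2
    linarith
  have := (mul_le_mul_iff_of_pos_left hp1).mp (by linarith [hQ] : ((p:ℚ) - 1) * (leeWtVec (c • x) : ℚ) ≤ ((p:ℚ) - 1) * (mu p * (hammingNorm x : ℚ)))
  exact this

lemma exists_indep_pair (K M : Type*) [Field K] [AddCommGroup M] [Module K M]
    [FiniteDimensional K M] (h2 : 2 ≤ finrank K M) :
    ∃ u v : M, ∀ a b : K, a • u + b • v = 0 → a = 0 ∧ b = 0 := by
  haveI : Nontrivial M := nontrivial_of_finrank_pos (by omega : 0 < finrank K M)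
  obtain ⟨u, hu⟩ := exists_ne (0 : M)
  have hspan : ¬ (∀ v : M, v ∈ Submodule.span K {u}) := by
    intro hall
    have htop : Submodule.span K {u} = ⊤ := by
      rw [eq_top_iff]; intro v _; exact hall v
    have h1 : finrank K (Submodule.span K {u}) = 1 := finrank_span_singleton hu
    rw [htop, finrank_top] at h1
    omega
  push_neg at hspan
  obtain ⟨v, hv⟩ := hspan
  refine ⟨u, v, fun a b hab => ?_⟩
  by_cases hb : b = 0
  · subst hb
    rw [zero_smul, add_zero] at hab
    rcases smul_eq_zero.mp hab with ha | h0
    · exact ⟨ha, rfl⟩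
    · exact absurd h0 hu
  · exfalso
    apply hv
    have : v = (-(b⁻¹ * a)) • u := by
      have hbv : b • v = -(a • u) := eq_neg_of_add_eq_zero_left (by rw [← hab]; abel)
      have := congrArg (fun z => b⁻¹ • z) hbv
      simp only [smul_smul, inv_mul_cancel₀ hb, one_smul] at this
      rw [this]
      rw [smul_neg, smul_smul]
      simp [neg_smul]
    rw [this]
    exact Submodule.smul_mem _ _ (Submodule.mem_span_singleton_self u)

lemma exists_low_hamming (p n k : ℕ) (hp : p.Prime) (hk : 2 ≤ k) (hkn : k ≤ n)
    (C : Submodule (ZMod p) (Fin n → ZMod p)) (hC : finrank (ZMod p) C = k) :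
    ∃ x ∈ C, x ≠ 0 ∧ hammingNorm x ≤ (n - k + 1) - (n - k + 1) / (p + 1) := by
  haveI : Fact p.Prime := ⟨hp⟩
  have hn2 : 2 ≤ n := le_trans hk hkn
  -- the projection onto the first k-2 coordinates
  have hk2n : k - 2 ≤ n := by omega
  let φ : (Fin n → ZMod p) →ₗ[ZMod p] (Fin (k-2) → ZMod p) :=
    LinearMap.funLeft (ZMod p) (ZMod p) (Fin.castLE hk2n)
  let ψ := φ.comp C.subtype
  have hker : 2 ≤ finrank (ZMod p) (LinearMap.ker ψ) := by
    have hrn := LinearMap.finrank_range_add_finrank_ker ψ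
    have hle : finrank (ZMod p) (LinearMap.range ψ) ≤ k - 2 := by
      have := Submodule.finrank_le (LinearMap.range ψ)
      rwa [finrank_pi, Fintype.card_fin] at this
    rw [hC] at hrn
    omega
  obtain ⟨u₀, v₀, hind₀⟩ := exists_indep_pair (ZMod p) (LinearMap.ker ψ) hker
  let ι : (LinearMap.ker ψ) →ₗ[ZMod p] (Fin n → ZMod p) :=
    C.subtype.comp (LinearMap.ker ψ).subtype
  have hinj : Function.Injective ι :=
    (Submodule.injective_subtype C).comp (Submodule.injective_subtype _)
  set u : Fin n → ZMod p := ι u₀ with hu_def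
  set v : Fin n → ZMod p := ι v₀ with hv_def
  have huC : u ∈ C := (u₀ : C).2
  have hvC : v ∈ C := (v₀ : C).2
  have hind : ∀ a b : ZMod p, a • u + b • v = 0 → a = 0 ∧ b = 0 := by
    intro a b hab
    apply hind₀
    apply hinj
    rw [map_add, map_smul, map_smul, map_zero]
    exact hab
  have hvanish : ∀ w₀ : LinearMap.ker ψ, ∀ i : Fin n, (i : ℕ) < k - 2 → ι w₀ i = 0 := by
    intro w₀ i hi
    have hw : ψ (w₀ : C) = 0 := w₀.2
    have h := congrFun hw ⟨(i : ℕ), hi⟩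
    have hci : Fin.castLE hk2n ⟨(i : ℕ), hi⟩ = i := Fin.ext rfl
    simp only [ψ, φ, LinearMap.comp_apply, LinearMap.funLeft_apply, Submodule.coe_subtype,
      Pi.zero_apply, hci] at h
    exact h
  -- pigeonhole
  let b : Fin n := ⟨k - 2, by omega⟩
  let T : Finset (Fin n) := Finset.Iio b
  have hTcard : T.card = k - 2 := by simp [T, Fin.card_Iio, b]
  have hmemT : ∀ i : Fin n, i ∈ T ↔ (i : ℕ) < k - 2 := by
    intro i; simp [T, Finset.mem_Iio, Fin.lt_def, b]
  let s : Finset (Fin n) := Tᶜ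
  have hscard : s.card = n - (k - 2) := by
    rw [Finset.card_compl, hTcard, Fintype.card_fin]
  let f : Fin n → Option (ZMod p) := fun i => if u i = 0 then none else some (v i * (u i)⁻¹)
  set f₀ : ℕ := (n - k + 1) / (p + 1) with hf₀
  have hpig : ∃ c ∈ (Finset.univ : Finset (Option (ZMod p))),
      f₀ < (s.filter fun i => f i = c).card := by
    apply Finset.exists_lt_card_fiber_of_mul_lt_card_of_maps_to
    · intro i _; exact Finset.mem_univ _
    · have h1 : (p + 1) * f₀ ≤ n - k + 1 := by
        rw [mul_comm]; exact Nat.div_mul_le_self _ _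
      have hgoal : (p + 1) * f₀ < s.card := by
        rw [hscard]; omega
      rw [Finset.card_univ, Fintype.card_option, ZMod.card]
      exact hgoal
  obtain ⟨c, _, hRcard⟩ := hpig
  set R : Finset (Fin n) := s.filter (fun i => f i = c) with hR
  have hRs : R ⊆ s := Finset.filter_subset _ _
  -- construct x
  have hmain : ∃ x, x ∈ C ∧ x ≠ 0 ∧ (∀ i ∈ T, x i = 0) ∧ (∀ i ∈ R, x i = 0) := by
    rcases c with _ | t
    · refine ⟨u, huC, ?_, ?_, ?_⟩
      · intro hu0
        have := (hind 1 0 (by rw [hu0, smul_zero, zero_smul, add_zero])).1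
        exact one_ne_zero this
      · intro i hi
        exact hvanish u₀ i ((hmemT i).mp hi)
      · intro i hi
        rw [hR, Finset.mem_filter] at hi
        by_contra hne
        simp only [f, if_neg hne] at hi
        exact Option.some_ne_none _ hi.2
    · refine ⟨t • u - v, C.sub_mem (C.smul_mem t huC) hvC, ?_, ?_, ?_⟩
      · intro h0
        have : t • u + (-1 : ZMod p) • v = 0 := by
          rw [neg_one_smul, ← sub_eq_add_neg]; exact h0
        have := (hind t (-1) this).2
        exact (neg_ne_zero.mpr one_ne_zero) this
      · intro i hi
        have h1 := hvanish u₀ i ((hmemT i).mp hi)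
        have h2 := hvanish v₀ i ((hmemT i).mp hi)
        simp only [Pi.sub_apply, Pi.smul_apply, smul_eq_mul]
        rw [← hu_def, ← hv_def] at *
        rw [h1, h2, mul_zero, sub_zero]
      · intro i hi
        rw [hR, Finset.mem_filter] at hi
        by_cases hui : u i = 0
        · simp only [f, if_pos hui] at hi
          exact absurd hi.2 (by simp)
        · simp only [f, if_neg hui] at hi
          have ht : v i * (u i)⁻¹ = t := Option.some_injective _ hi.2
          have hv_eq : v i = t * u i := by
            field_simp at ht
            linear_combination ht
          simp only [Pi.sub_apply, Pi.smul_apply, smul_eq_mul, hv_eq]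
          ring
  obtain ⟨x, hxC, hx0, hxT, hxR⟩ := hmain
  refine ⟨x, hxC, hx0, ?_⟩
  have hsup : (Finset.univ.filter fun i => x i ≠ 0) ⊆ (T ∪ R)ᶜ := by
    intro i hi
    rw [Finset.mem_filter] at hi
    rw [Finset.mem_compl, Finset.mem_union]
    rintro (hiT | hiR)
    · exact hi.2 (hxT i hiT)
    · exact hi.2 (hxR i hiR)
  have hdisj : Disjoint T R := by
    rw [Finset.disjoint_left]
    intro i hiT hiR
    have := hRs hiR
    simp [s, Finset.mem_compl] at this
    exact this hiT
  have hcard : hammingNorm x ≤ n - (T.card + R.card) := by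
    have h1 : hammingNorm x ≤ ((T ∪ R)ᶜ).card := Finset.card_le_card hsup
    rwa [Finset.card_compl, Finset.card_union_of_disjoint hdisj, Fintype.card_fin] at h1
  have hRcard' : f₀ + 1 ≤ R.card := hRcard
  have hRub : R.card ≤ n - (k - 2) := by
    rw [← hscard]; exact Finset.card_le_card hRs
  rw [hTcard] at hcard
  have hdiv : f₀ ≤ n - k + 1 := Nat.div_le_self _ _
  omega


lemma mu_nonneg (p : ℕ) (hp : 2 ≤ p) : 0 ≤ mu p := by
  unfold mu
  have h2 : (2:ℚ) ≤ (p:ℚ) := by exact_mod_cast hp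
  split_ifs
  · apply div_nonneg (by positivity)
    linarith
  · linarith

lemma leeWt_le (q : ℕ) (a : ZMod q) : leeWt a ≤ q := by
  unfold leeWt
  exact le_trans (min_le_right _ _) (Nat.sub_le _ _)

lemma code_bound (p n k : ℕ) (hp : p.Prime) (hk : 2 ≤ k) (hkn : k ≤ n)
    (C : Submodule (ZMod p) (Fin n → ZMod p)) (hC : finrank (ZMod p) C = k) :
    (minLee C : ℚ) ≤ mu p * ((((n - k + 1) - (n - k + 1) / (p + 1) : ℕ)) : ℚ) := by
  haveI : Fact p.Prime := ⟨hp⟩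
  obtain ⟨x, hxC, hx0, hxham⟩ := exists_low_hamming p n k hp hk hkn C hC
  obtain ⟨c, hc0, hcle⟩ := exists_smul_leeWt_le p n hp x
  have hmem : leeWtVec (c • x) ∈ {w | ∃ y ∈ C, y ≠ 0 ∧ leeWtVec y = w} :=
    ⟨c • x, C.smul_mem c hxC, smul_ne_zero hc0 hx0, rfl⟩
  have h1 : minLee C ≤ leeWtVec (c • x) := Nat.sInf_le hmem
  have h2 : (minLee C : ℚ) ≤ (leeWtVec (c • x) : ℚ) := by exact_mod_cast h1
  refine le_trans h2 (le_trans hcle ?_)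
  apply mul_le_mul_of_nonneg_left _ (mu_nonneg p hp.two_le)
  exact_mod_cast hxham

theorem phi_le_mu_floor_bound (p n k : ℕ) (hp : p.Prime) (hk : 2 ≤ k) (hkn : k ≤ n) :
    (Phi n k p : ℚ) ≤ mu p * ((n : ℚ) - (k : ℚ) + 1 - (((n - k + 1) / (p + 1) : ℕ) : ℚ)) := by
  have hp2 := hp.two_le
  set S := {d | ∃ C : Submodule (ZMod p) (Fin n → ZMod p),
    Module.finrank (ZMod p) ↥C = k ∧ minLee C = d} with hS
  set f₀ : ℕ := (n - k + 1) / (p + 1) with hf₀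
  have hcastm : ((n - k + 1 : ℕ) : ℚ) = (n : ℚ) - (k : ℚ) + 1 := by
    push_cast [Nat.cast_sub hkn]
    ring
  have hf₀le : f₀ ≤ n - k + 1 := Nat.div_le_self _ _
  have hRHS : mu p * ((((n - k + 1) - f₀ : ℕ)) : ℚ)
      = mu p * ((n : ℚ) - (k : ℚ) + 1 - (f₀ : ℚ)) := by
    rw [Nat.cast_sub hf₀le, hcastm]
  by_cases hne : S.Nonempty
  · have hbdd : BddAbove S := by
      refine ⟨n * p, ?_⟩
      rintro d ⟨C, hCk, hCd⟩
      rw [← hCd]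
      unfold minLee
      by_cases hw : {w | ∃ x ∈ C, x ≠ 0 ∧ leeWtVec x = w}.Nonempty
      · obtain ⟨w, hwmem⟩ := hw
        have hmem := Nat.sInf_mem ⟨w, hwmem⟩
        obtain ⟨x, _, _, hxw⟩ := hmem
        rw [← hxw]
        calc leeWtVec x ≤ ∑ _i : Fin n, p :=
              Finset.sum_le_sum (fun i _ => leeWt_le p (x i))
          _ = n * p := by rw [Finset.sum_const, Finset.card_univ, Fintype.card_fin, smul_eq_mul]
      · rw [Set.not_nonempty_iff_eq_empty] at hw
        rw [hw, Nat.sInf_empty]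
        exact Nat.zero_le _
    have hmem := Nat.sSup_mem hne hbdd
    obtain ⟨C, hCk, hCd⟩ := hmem
    have := code_bound p n k hp hk hkn C hCk
    rw [hCd] at this
    have hPhi : Phi n k p = sSup S := rfl
    rw [hPhi, ← hRHS]
    exact this
  · rw [Set.not_nonempty_iff_eq_empty] at hne
    have : Phi n k p = 0 := by
      unfold Phi
      rw [← hS, hne, csSup_empty]
      rfl
    rw [this]
    push_cast
    rw [← hRHS]
    apply mul_nonneg (mu_nonneg p hp2)
    positivity
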